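/- Let G be a finite abelian group, let Γ be a set of d characters on G and let δ > 0. With B_{Γ,δ} the Bohr neighbourhood {x : |arg γ(x)| ≤ 2πδ for all γ ∈ Γ}, one has |B_{Γ,2δ}| ≤ 5^d · |B_{Γ,δ}|. -/

import Mathlib

open Real

private lemma bohr_arg_div_sub {z w : ℂ} (hz : ‖z‖ = 1) (hw : ‖w‖ = 1)
    (h : |z.arg - w.arg| < π) : (z / w).arg = z.arg - w.arg := by
  have hz' : z = Complex.exp (z.arg * Complex.I) := by
    conv_lhs => rw [← Complex.norm_mul_exp_arg_mul_I z]
    rw [hz]; simp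
  have hw' : w = Complex.exp (w.arg * Complex.I) := by
    conv_lhs => rw [← Complex.norm_mul_exp_arg_mul_I w]
    rw [hw]; simp
  have hdiv : Complex.exp ((↑(z.arg - w.arg)) * Complex.I) = z / w := by
    rw [Complex.ofReal_sub, sub_mul, Complex.exp_sub, ← hz', ← hw']
  obtain ⟨h1, h2⟩ := abs_lt.mp h
  rw [← hdiv, Complex.exp_mul_I]
  exact Complex.arg_cos_add_sin_mul_I ⟨h1, h2.le⟩

private lemma bohr_floor_bucket {L A B : ℝ} (hL : 0 < L) (hA0 : 0 ≤ A) (hA5 : A ≤ 5 * L)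
    (hB0 : 0 ≤ B) (hB5 : B ≤ 5 * L)
    (h : min 4 (⌊A / L⌋.toNat) = min 4 (⌊B / L⌋.toNat)) : |A - B| ≤ L := by
  set a := A / L with ha_def
  set b := B / L with hb_def
  have ha0 : 0 ≤ a := div_nonneg hA0 hL.le
  have hb0 : 0 ≤ b := div_nonneg hB0 hL.le
  have ha5 : a ≤ 5 := by rw [ha_def, div_le_iff₀ hL]; linarith
  have hb5 : b ≤ 5 := by rw [hb_def, div_le_iff₀ hL]; linarith
  have hfa : (0:ℤ) ≤ ⌊a⌋ := Int.floor_nonneg.mpr ha0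
  have hfb : (0:ℤ) ≤ ⌊b⌋ := Int.floor_nonneg.mpr hb0
  have key : |a - b| ≤ 1 := by
    by_cases h4 : 4 ≤ ⌊a⌋
    · have h4' : 4 ≤ ⌊a⌋.toNat := by omega
      have : min 4 (⌊b⌋.toNat) = 4 := by omega
      have hb4 : 4 ≤ ⌊b⌋ := by omega
      have : (4:ℝ) ≤ a := le_trans (by exact_mod_cast h4) (Int.floor_le a)
      have : (4:ℝ) ≤ b := le_trans (by exact_mod_cast hb4) (Int.floor_le b)
      rw [abs_sub_le_iff]; constructor <;> linarith
    · have heq : ⌊a⌋ = ⌊b⌋ := by omega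
      have h1 : a < ⌊a⌋ + 1 := Int.lt_floor_add_one a
      have h2 : b < ⌊b⌋ + 1 := Int.lt_floor_add_one b
      have h3 : (⌊a⌋ : ℝ) ≤ a := Int.floor_le a
      have h4' : (⌊b⌋ : ℝ) ≤ b := Int.floor_le b
      rw [heq] at h1 h3
      rw [abs_sub_le_iff]; constructor <;> linarith
  have : A - B = (a - b) * L := by rw [ha_def, hb_def]; field_simp
  rw [this, abs_mul, abs_of_pos hL]
  nlinarith [abs_nonneg (a - b)]

/-- Lemma 4.1(ii). Let `G` be a finite abelian group, let `Γ` be a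
set of `d` characters on `G` and let `δ > 0`. With
`B_{Γ,δ} = {x : |arg γ(x)| ≤ 2πδ for all γ ∈ Γ}`, one has
`|B_{Γ,2δ}| ≤ 5^d · |B_{Γ,δ}|`. -/
theorem bohr_card_doubling {G : Type*} [AddCommGroup G] [Fintype G]
    (Γ : Finset (AddChar G ℂ)) (δ : ℝ) (hδ : 0 < δ) :
    (Nat.card {x : G | ∀ γ ∈ Γ, |Complex.arg (γ x)| ≤ 2 * π * (2 * δ)} : ℝ) ≤
      5 ^ Γ.card * (Nat.card {x : G | ∀ γ ∈ Γ, |Complex.arg (γ x)| ≤ 2 * π * δ} : ℝ) := by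
  classical
  have hπ := Real.pi_pos
  have habs : ∀ (γ : AddChar G ℂ) (x : G), ‖γ x‖ = 1 := by
    intro γ x
    have hpow : (γ x) ^ (Fintype.card G) = 1 := by
      rw [← AddChar.map_nsmul_eq_pow, card_nsmul_eq_zero, AddChar.map_zero_eq_one]
    have h := Complex.norm_eq_one_of_pow_eq_one hpow Fintype.card_ne_zero
    exact h
  set B2 : Finset G := Finset.univ.filter
    (fun x : G => ∀ γ ∈ Γ, |Complex.arg (γ x)| ≤ 2 * π * (2 * δ)) with hB2
  set B1 : Finset G := Finset.univ.filter
    (fun x : G => ∀ γ ∈ Γ, |Complex.arg (γ x)| ≤ 2 * π * δ) with hB1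
  have hcard2 : Nat.card {x : G | ∀ γ ∈ Γ, |Complex.arg (γ x)| ≤ 2 * π * (2 * δ)} = B2.card := by
    rw [show {x : G | ∀ γ ∈ Γ, |Complex.arg (γ x)| ≤ 2 * π * (2 * δ)} = ↑B2 from by
      ext x; simp [hB2], Nat.card_coe_set_eq, Set.ncard_coe_finset]
  have hcard1 : Nat.card {x : G | ∀ γ ∈ Γ, |Complex.arg (γ x)| ≤ 2 * π * δ} = B1.card := by
    rw [show {x : G | ∀ γ ∈ Γ, |Complex.arg (γ x)| ≤ 2 * π * δ} = ↑B1 from by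
      ext x; simp [hB1], Nat.card_coe_set_eq, Set.ncard_coe_finset]
  rw [hcard2, hcard1]
  have main : B2.card ≤ 5 ^ Γ.card * B1.card := by
    by_cases hhalf : (1:ℝ)/2 ≤ δ
    · -- B1 = univ
      have hB1univ : B1 = Finset.univ := by
        rw [hB1, Finset.filter_true_of_mem]
        intro x _ γ _
        calc |Complex.arg (γ x)| ≤ π := Complex.abs_arg_le_pi _
          _ ≤ 2 * π * δ := by nlinarith
      calc B2.card ≤ Fintype.card G := Finset.card_filter_le _ _
        _ = B1.card := by rw [hB1univ, Finset.card_univ]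
        _ ≤ 5 ^ Γ.card * B1.card := Nat.le_mul_of_pos_left _ (pow_pos (by norm_num) _)
    · push_neg at hhalf
      set L : ℝ := 8 * π * δ / 5 with hL_def
      have hL : 0 < L := by positivity
      set f : G → ({γ // γ ∈ Γ} → Fin 5) := fun x γ =>
        ⟨min 4 (⌊(Complex.arg (γ.1 x) + 4 * π * δ) / L⌋.toNat), by omega⟩ with hf
      -- key: same bucket implies difference in B1
      have key : ∀ x ∈ B2, ∀ y ∈ B2, f x = f y → x - y ∈ B1 := by
        intro x hx y hy hxy
        rw [hB2, Finset.mem_filter] at hx hy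
        rw [hB1, Finset.mem_filter]
        refine ⟨Finset.mem_univ _, fun γ hγ => ?_⟩
        have hax := hx.2 γ hγ
        have hay := hy.2 γ hγ
        set a := Complex.arg (γ x)
        set b := Complex.arg (γ y)
        have hbound : |a - b| ≤ L := by
          have hfx := congrFun hxy ⟨γ, hγ⟩
          have hfx' : min 4 (⌊(a + 4 * π * δ) / L⌋.toNat)
              = min 4 (⌊(b + 4 * π * δ) / L⌋.toNat) := by
            simpa [hf] using congrArg Fin.val hfx
          have h1 := abs_le.mp hax
          have h2 := abs_le.mp hay
          have := bohr_floor_bucket hL (A := a + 4 * π * δ) (B := b + 4 * π * δ)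
            (by nlinarith [h1.1]) (by rw [hL_def]; nlinarith [h1.2])
            (by nlinarith [h2.1]) (by rw [hL_def]; nlinarith [h2.2]) hfx'
          simpa using this
        have hLlt : L < π := by rw [hL_def]; nlinarith
        have hL2 : L ≤ 2 * π * δ := by rw [hL_def]; nlinarith
        have harg : Complex.arg (γ (x - y)) = a - b := by
          rw [AddChar.map_sub_eq_div]
          exact bohr_arg_div_sub (habs γ x) (habs γ y) (lt_of_le_of_lt hbound hLlt)
        rw [harg]
        exact le_trans hbound hL2
      -- pigeonhole
      have hsum : B2.card = ∑ k ∈ (Finset.univ : Finset ({γ // γ ∈ Γ} → Fin 5)),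
          (B2.filter (fun x => f x = k)).card :=
        Finset.card_eq_sum_card_fiberwise (fun x _ => Finset.mem_univ (f x))
      have hfiber : ∀ k : ({γ // γ ∈ Γ} → Fin 5),
          (B2.filter (fun x => f x = k)).card ≤ B1.card := by
        intro k
        rcases (B2.filter (fun x => f x = k)).eq_empty_or_nonempty with he | ⟨x₀, hx₀⟩
        · simp [he]
        · rw [Finset.mem_filter] at hx₀
          apply Finset.card_le_card_of_injOn (fun y => y - x₀)
          · intro y hy
            rw [Finset.mem_coe, Finset.mem_filter] at hy
            exact key y hy.1 x₀ hx₀.1 (hy.2.trans hx₀.2.symm)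
          · intro y _ z _ hyz
            exact sub_left_injective hyz
      calc B2.card = ∑ k ∈ (Finset.univ : Finset ({γ // γ ∈ Γ} → Fin 5)),
            (B2.filter (fun x => f x = k)).card := hsum
        _ ≤ ∑ _k ∈ (Finset.univ : Finset ({γ // γ ∈ Γ} → Fin 5)), B1.card :=
            Finset.sum_le_sum (fun k _ => hfiber k)
        _ = Fintype.card ({γ // γ ∈ Γ} → Fin 5) * B1.card := by
            rw [Finset.sum_const, Finset.card_univ, smul_eq_mul]
        _ = 5 ^ Γ.card * B1.card := by
            rw [Fintype.card_fun, Fintype.card_fin, Fintype.card_coe]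
  calc (B2.card : ℝ) ≤ ((5 ^ Γ.card * B1.card : ℕ) : ℝ) := by exact_mod_cast main
    _ = 5 ^ Γ.card * B1.card := by push_cast; ring
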